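/- Let ν > 1/6 and θ ∈ (0,1), and let f(x) = ν x(1−x)(x−θ). Then there exists a constant C > 0, depending only on ν and θ, such that for all continuously differentiable functions u, v : [0,1] → ℝ with u(0) = u(1) = v(0) = v(1) = 0, one has ∫₀¹ (u(x)−v(x))·(u(x)u′(x) − v(x)v′(x)) dx + ∫₀¹ (u(x)−v(x))·(f(u(x)) − f(v(x))) dx ≤ (1/2) ∫₀¹ (u′(x)−v′(x))² dx + C ∫₀¹ (u(x)−v(x))² dx. -/

import Mathlib

/-- Generalized monotonicity (Lemma 2.1): for `ν > 1/6`, `θ ∈ (0,1)` and the Huxley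
nonlinearity `f x = ν x (1-x) (x-θ)`, there is `C > 0` (depending only on `ν, θ`) such that
for all `C¹` functions `u v : [0,1] → ℝ` vanishing at the endpoints,
`∫₀¹ (u-v)(u u' - v v') + ∫₀¹ (u-v)(f∘u - f∘v) ≤ (1/2)∫₀¹ (u'-v')² + C ∫₀¹ (u-v)²`. -/
theorem stmt0 (ν θ : ℝ) (hν : 1/6 < ν) (hθ : θ ∈ Set.Ioo (0:ℝ) 1)
    (f : ℝ → ℝ) (hf : ∀ x, f x = ν * x * (1 - x) * (x - θ)) :
    ∃ C : ℝ, 0 < C ∧ ∀ u v : ℝ → ℝ,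
      ContDiffOn ℝ 1 u (Set.Icc 0 1) → ContDiffOn ℝ 1 v (Set.Icc 0 1) →
      u 0 = 0 → u 1 = 0 → v 0 = 0 → v 1 = 0 →
      (∫ x in (0:ℝ)..1, (u x - v x) *
          (u x * derivWithin u (Set.Icc 0 1) x - v x * derivWithin v (Set.Icc 0 1) x)) +
        (∫ x in (0:ℝ)..1, (u x - v x) * (f (u x) - f (v x))) ≤
      (1/2) * (∫ x in (0:ℝ)..1,
          (derivWithin u (Set.Icc 0 1) x - derivWithin v (Set.Icc 0 1) x)^2) +
        C * (∫ x in (0:ℝ)..1, (u x - v x)^2) := by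
  obtain ⟨hθ0, hθ1⟩ := hθ
  have hν0 : 0 < ν := by linarith
  obtain ⟨A, hAdef⟩ : ∃ A : ℝ, A = 3*ν/4 - 1/8 := ⟨_, rfl⟩
  have hA : 0 < A := by rw [hAdef]; linarith
  obtain ⟨L, hLdef⟩ : ∃ L : ℝ, L = ν*(1+θ) := ⟨_, rfl⟩
  obtain ⟨C, hCdef⟩ : ∃ C : ℝ, C = L^2/(4*A) + 1 := ⟨_, rfl⟩
  have hCnn : 0 ≤ L^2/(4*A) := div_nonneg (sq_nonneg _) (by linarith)
  have hC : 0 < C := by rw [hCdef]; linarith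
  refine ⟨C, hC, ?_⟩
  intro u v hu hv hu0 hu1 hv0 hv1
  set u' := derivWithin u (Set.Icc 0 1) with hu'def
  set v' := derivWithin v (Set.Icc 0 1) with hv'def
  -- key pointwise inequality
  have key : ∀ s : ℝ, -A*s^2 + L*s ≤ C - 1 := by
    intro s
    have h1 : -A*s^2 + L*s ≤ L^2/(4*A) := by
      rw [le_div_iff₀ (by linarith : (0:ℝ) < 4*A)]
      nlinarith [sq_nonneg (2*A*s - L)]
    rw [hCdef]; linarith
  have hpt : ∀ a b a' b' : ℝ,
      (a-b)*(f a - f b) - (a'-b')*(a^2-b^2)/2 ≤ (1/2)*(a'-b')^2 + C*(a-b)^2 := by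
    intro a b a' b'
    have h1 : -((a'-b')*(a^2-b^2)/2) ≤ (1/2)*(a'-b')^2 + (1/8)*((a+b)*(a-b))^2 := by
      nlinarith [sq_nonneg (2*(a'-b') + (a+b)*(a-b))]
    have h2 : (a-b)*(f a - f b)
        = (a-b)^2 * (ν*(-(a^2+a*b+b^2) + (1+θ)*(a+b) - θ)) := by
      rw [hf a, hf b]; ring
    have h3 : (1/8)*(a+b)^2 + ν*(-(a^2+a*b+b^2) + (1+θ)*(a+b) - θ) ≤ C := by
      have hk := key (a+b)
      rw [hAdef, hLdef] at hk
      nlinarith [mul_nonneg hν0.le (sq_nonneg (a-b)), mul_nonneg hν0.le hθ0.le]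
    have h4 : (a-b)^2 * ((1/8)*(a+b)^2 + ν*(-(a^2+a*b+b^2) + (1+θ)*(a+b) - θ))
        ≤ (a-b)^2 * C := mul_le_mul_of_nonneg_left h3 (sq_nonneg _)
    rw [h2]
    linarith [h1, h4]
  -- continuity facts
  have hUD : UniqueDiffOn ℝ (Set.Icc (0:ℝ) 1) := uniqueDiffOn_Icc zero_lt_one
  have huc : ContinuousOn u (Set.Icc 0 1) := hu.continuousOn
  have hvc : ContinuousOn v (Set.Icc 0 1) := hv.continuousOn
  have hu'c : ContinuousOn u' (Set.Icc 0 1) := hu.continuousOn_derivWithin hUD le_rfl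
  have hv'c : ContinuousOn v' (Set.Icc 0 1) := hv.continuousOn_derivWithin hUD le_rfl
  have hud : ∀ x ∈ Set.Ioo (0:ℝ) 1, HasDerivAt u (u' x) x := by
    intro x hx
    have hmem : Set.Icc (0:ℝ) 1 ∈ nhds x := Icc_mem_nhds hx.1 hx.2
    exact ((hu.differentiableOn one_ne_zero x (Set.mem_Icc_of_Ioo hx)).hasDerivWithinAt).hasDerivAt hmem
  have hvd : ∀ x ∈ Set.Ioo (0:ℝ) 1, HasDerivAt v (v' x) x := by
    intro x hx
    have hmem : Set.Icc (0:ℝ) 1 ∈ nhds x := Icc_mem_nhds hx.1 hx.2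
    exact ((hv.differentiableOn one_ne_zero x (Set.mem_Icc_of_Ioo hx)).hasDerivWithinAt).hasDerivAt hmem
  -- integrands
  have hIcc : Set.uIcc (0:ℝ) 1 = Set.Icc 0 1 := Set.uIcc_of_le zero_le_one
  have hg1c : ContinuousOn (fun x => (u x - v x) * (u x * u' x - v x * v' x)) (Set.Icc 0 1) :=
    (huc.sub hvc).mul ((huc.mul hu'c).sub (hvc.mul hv'c))
  have hg2c : ContinuousOn (fun x => (u' x - v' x) * (u x^2 - v x^2)/2) (Set.Icc 0 1) :=
    ((hu'c.sub hv'c).mul ((huc.pow 2).sub (hvc.pow 2))).div_const 2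
  have hg1i : IntervalIntegrable (fun x => (u x - v x) * (u x * u' x - v x * v' x))
      MeasureTheory.volume 0 1 := (hg1c.mono (by rw [hIcc])).intervalIntegrable
  have hg2i : IntervalIntegrable (fun x => (u' x - v' x) * (u x^2 - v x^2)/2)
      MeasureTheory.volume 0 1 := (hg2c.mono (by rw [hIcc])).intervalIntegrable
  -- FTC / integration by parts
  have hcontF : ContinuousOn (fun y => (u y - v y) * (u y^2 - v y^2)/2) (Set.Icc (0:ℝ) 1) :=
    ((huc.sub hvc).mul ((huc.pow 2).sub (hvc.pow 2))).div_const 2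
  have hderivF : ∀ x ∈ Set.Ioo (0:ℝ) 1, HasDerivAt (fun y => (u y - v y) * (u y^2 - v y^2)/2)
      ((u' x - v' x) * (u x^2 - v x^2)/2 + (u x - v x) * (u x * u' x - v x * v' x)) x := by
    intro x hx
    have HU := hud x hx
    have HV := hvd x hx
    have H : HasDerivAt (fun y => (u y - v y) * (u y^2 - v y^2)/2)
        (((u' x - v' x) * (u x^2 - v x^2) +
          (u x - v x) * ((2:ℕ) * u x^(2-1) * u' x - (2:ℕ) * v x^(2-1) * v' x))/2) x :=
      (((HU.sub HV).mul ((HU.pow 2).sub (HV.pow 2))).div_const 2)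
    convert H using 1
    push_cast
    ring
  have hFT := intervalIntegral.integral_eq_sub_of_hasDerivAt_of_le zero_le_one
    hcontF hderivF (hg2i.add hg1i)
  have hsplit : (∫ x in (0:ℝ)..1, (u x - v x) * (u x * u' x - v x * v' x))
      = - (∫ x in (0:ℝ)..1, (u' x - v' x) * (u x^2 - v x^2)/2) := by
    rw [intervalIntegral.integral_add hg2i hg1i] at hFT
    rw [hu0, hu1, hv0, hv1] at hFT
    linarith [hFT]
  -- remaining integrands
  have hfc : Continuous f := by
    have hfe : f = fun x => ν * x * (1 - x) * (x - θ) := funext hf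
    rw [hfe]
    exact ((continuous_const.mul continuous_id').mul
      (continuous_const.sub continuous_id')).mul (continuous_id'.sub continuous_const)
  have hh1c : ContinuousOn (fun x => (u x - v x) * (f (u x) - f (v x))) (Set.Icc 0 1) :=
    (huc.sub hvc).mul ((hfc.comp_continuousOn huc).sub (hfc.comp_continuousOn hvc))
  have hh1i : IntervalIntegrable (fun x => (u x - v x) * (f (u x) - f (v x)))
      MeasureTheory.volume 0 1 := (hh1c.mono (by rw [hIcc])).intervalIntegrable
  have hr1i : IntervalIntegrable (fun x => (1/2)*(u' x - v' x)^2) MeasureTheory.volume 0 1 :=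
    (((continuousOn_const.mul ((hu'c.sub hv'c).pow 2))).mono (by rw [hIcc])).intervalIntegrable
  have hr2i : IntervalIntegrable (fun x => C*(u x - v x)^2) MeasureTheory.volume 0 1 :=
    (((continuousOn_const.mul ((huc.sub hvc).pow 2))).mono (by rw [hIcc])).intervalIntegrable
  -- main integral inequality
  have hmono : (∫ x in (0:ℝ)..1, ((u x - v x) * (f (u x) - f (v x))
        - (u' x - v' x) * (u x^2 - v x^2)/2))
      ≤ ∫ x in (0:ℝ)..1, ((1/2)*(u' x - v' x)^2 + C*(u x - v x)^2) := by
    apply intervalIntegral.integral_mono_on zero_le_one (hh1i.sub hg2i) (hr1i.add hr2i)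
    intro x _
    exact hpt (u x) (v x) (u' x) (v' x)
  rw [intervalIntegral.integral_sub hh1i hg2i,
      intervalIntegral.integral_add hr1i hr2i,
      intervalIntegral.integral_const_mul, intervalIntegral.integral_const_mul] at hmono
  linarith [hmono, hsplit]
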